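/- Let (Q_n) be an increasing sequence of nonempty convex compact subsets of ℂ, and let H_{Q_n}(z) = sup_{t ∈ Q_n} Re(t·z) denote the support function of Q_n. Then for every n ∈ ℕ and every k ∈ ℕ there exist s ∈ ℕ and a constant C ≥ 0 such that for all z ∈ ℂ: sup_{|t−z|≤1} (H_{Q_n}(t) + |t|/s) + ln(1 + |z|) ≤ inf_{|t−z|≤1} (H_{Q_n}(t) + |t|/k) + C. -/

import Mathlib

open Complex

/-- The support function `H_Ω(z) = sup_{t ∈ Ω} Re(t·z)` of a set `Ω ⊂ ℂ`. -/
noncomputable def supportFn (Ω : Set ℂ) (z : ℂ) : ℝ := sSup ((fun t => (t * z).re) '' Ω)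

/-- for an increasing sequence `(Q n)` of nonempty convex compact subsets
of `ℂ`, the weights `v_{n,k}(z) = H_{Q n}(z) + |z|/k` satisfy: for all `n, k` there exist
`s` and `C ≥ 0` with
`sup_{|t−z|≤1}(H_{Q n}(t) + |t|/s) + ln(1+|z|) ≤ inf_{|t−z|≤1}(H_{Q n}(t) + |t|/k) + C`
for all `z ∈ ℂ`. -/
theorem support_function_weight_estimate
    (Q : ℕ → Set ℂ) (hQc : ∀ n, IsCompact (Q n)) (hQne : ∀ n, (Q n).Nonempty)
    (hQconv : ∀ n, Convex ℝ (Q n)) (hQmono : Monotone Q) :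
    ∀ n k : ℕ, 0 < k → ∃ s : ℕ, 0 < s ∧ ∃ C : ℝ, 0 ≤ C ∧ ∀ z : ℂ,
      sSup ((fun t => supportFn (Q n) t + ‖t‖ / (s : ℝ)) '' Metric.closedBall z 1) +
          Real.log (1 + ‖z‖) ≤
        sInf ((fun t => supportFn (Q n) t + ‖t‖ / (k : ℝ)) '' Metric.closedBall z 1) + C := by
  intro n k hk
  have hk' : (0 : ℝ) < (k : ℝ) := by exact_mod_cast hk
  have hk1 : (1 : ℝ) ≤ (k : ℝ) := by exact_mod_cast hk
  obtain ⟨M, hM⟩ := (hQc n).isBounded.exists_norm_le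
  set M' : ℝ := max M 0 with hM'def
  have hM'0 : 0 ≤ M' := le_max_right _ _
  have hM' : ∀ q ∈ Q n, ‖q‖ ≤ M' := fun q hq => le_trans (hM q hq) (le_max_left _ _)
  have hlog2k : 0 ≤ Real.log (2 * k) := Real.log_nonneg (by linarith)
  refine ⟨2 * k, by positivity, 2 * M' + Real.log (2 * (k : ℝ)) + 2, by linarith, ?_⟩
  intro z
  -- Lipschitz bound for the support function
  have key : ∀ t t' : ℂ, supportFn (Q n) t ≤ supportFn (Q n) t' + M' * ‖t - t'‖ := by
    intro t t'
    unfold supportFn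
    apply csSup_le ((hQne n).image _)
    rintro x ⟨q, hq, rfl⟩
    have h1 : (q * t').re ≤ sSup ((fun t => (t * t').re) '' Q n) := by
      refine le_csSup ?_ ⟨q, hq, rfl⟩
      exact ((hQc n).image (by fun_prop)).bddAbove
    have h2 : (q * (t - t')).re ≤ M' * ‖t - t'‖ := by
      calc (q * (t - t')).re ≤ ‖q * (t - t')‖ := le_trans (le_abs_self _) (by exact Complex.abs_re_le_norm _)
        _ = ‖q‖ * ‖t - t'‖ := norm_mul _ _
        _ ≤ M' * ‖t - t'‖ := by
            apply mul_le_mul_of_nonneg_right (hM' q hq) (norm_nonneg _)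
    have h3 : (q * t).re = (q * t').re + (q * (t - t')).re := by
      rw [mul_sub]
      simp [Complex.sub_re]
    linarith
  have hball_ne : (Metric.closedBall z 1).Nonempty := ⟨z, by simp⟩
  -- pointwise estimate
  have hmain : ∀ t ∈ Metric.closedBall z 1, ∀ t' ∈ Metric.closedBall z 1,
      supportFn (Q n) t + ‖t‖ / ((2 * k : ℕ) : ℝ) + Real.log (1 + ‖z‖) ≤
      supportFn (Q n) t' + ‖t'‖ / (k : ℝ) + (2 * M' + Real.log (2 * (k : ℝ)) + 2) := by
    intro t ht t' ht'
    rw [Metric.mem_closedBall, dist_eq_norm] at ht ht'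
    have htz : ‖t‖ ≤ ‖z‖ + 1 := by
      calc ‖t‖ = ‖z + (t - z)‖ := by ring_nf
        _ ≤ ‖z‖ + ‖t - z‖ := norm_add_le _ _
        _ ≤ ‖z‖ + 1 := by linarith
    have ht'z : ‖z‖ - 1 ≤ ‖t'‖ := by
      have : ‖z‖ ≤ ‖t'‖ + ‖t' - z‖ := by
        calc ‖z‖ = ‖t' - (t' - z)‖ := by ring_nf
          _ ≤ ‖t'‖ + ‖t' - z‖ := norm_sub_le _ _
      linarith
    have htt' : ‖t - t'‖ ≤ 2 := by
      calc ‖t - t'‖ = ‖(t - z) - (t' - z)‖ := by ring_nf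
        _ ≤ ‖t - z‖ + ‖t' - z‖ := norm_sub_le _ _
        _ ≤ 2 := by linarith
    have hA := key t t'
    have hB : M' * ‖t - t'‖ ≤ 2 * M' := by nlinarith
    have hcast : ((2 * k : ℕ) : ℝ) = 2 * (k : ℝ) := by push_cast; ring
    rw [hcast]
    have hC1 : ‖t‖ / (2 * (k : ℝ)) ≤ (‖z‖ + 1) / (2 * (k : ℝ)) := by gcongr
    have hC2 : (‖z‖ - 1) / (k : ℝ) ≤ ‖t'‖ / (k : ℝ) := by gcongr
    have hz0 : (0 : ℝ) < 1 + ‖z‖ := by positivity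
    have hD : Real.log (1 + ‖z‖) ≤ Real.log (2 * (k : ℝ)) + (1 + ‖z‖) / (2 * (k : ℝ)) - 1 := by
      have h := Real.log_le_sub_one_of_pos (x := (1 + ‖z‖) / (2 * (k : ℝ))) (by positivity)
      rw [Real.log_div (by positivity) (by positivity)] at h
      linarith
    have hE : (‖z‖ + 1) / (2 * (k : ℝ)) + (1 + ‖z‖) / (2 * (k : ℝ)) - (‖z‖ - 1) / (k : ℝ)
        = 2 / (k : ℝ) := by field_simp; ring
    have hF : 2 / (k : ℝ) ≤ 2 := by
      calc 2 / (k : ℝ) ≤ 2 / 1 := by gcongr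
        _ = 2 := by norm_num
    linarith
  -- assemble
  have h1 : sSup ((fun t => supportFn (Q n) t + ‖t‖ / ((2 * k : ℕ) : ℝ)) '' Metric.closedBall z 1)
      ≤ sInf ((fun t => supportFn (Q n) t + ‖t‖ / (k : ℝ)) '' Metric.closedBall z 1)
        + (2 * M' + Real.log (2 * (k : ℝ)) + 2) - Real.log (1 + ‖z‖) := by
    apply csSup_le (hball_ne.image _)
    rintro x ⟨t, ht, rfl⟩
    have h2 : (fun t => supportFn (Q n) t + ‖t‖ / ((2 * k : ℕ) : ℝ)) t + Real.log (1 + ‖z‖)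
        - (2 * M' + Real.log (2 * (k : ℝ)) + 2)
        ≤ sInf ((fun t => supportFn (Q n) t + ‖t‖ / (k : ℝ)) '' Metric.closedBall z 1) := by
      apply le_csInf (hball_ne.image _)
      rintro y ⟨t', ht', rfl⟩
      have := hmain t ht t' ht'
      simp only at this ⊢
      linarith
    simp only at h2 ⊢
    linarith
  linarith
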